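/- arXiv:1106.2365 — 2 statements merged into one kernel-verified Lean document; each statement's English description precedes it below -/
import Mathlib

section
/- Let V = ℝ² with an inner product for which {v₁, v₂} is an orthonormal basis. Suppose Δ₁, Δ₂ ⊆ V are cones (closed under positive scalar multiplication) with 0 < ε₁, ε₂ < 1 such that ⟨x, vᵢ⟩² ≤ εᵢ‖x‖² for all nonzero x ∈ Δᵢ (i = 1, 2). Choose λ > 0 with λ⁴ > ε₁ε₂ / ((1-ε₁)(1-ε₂)), and define the linear map ρ: V → V by ρ(v₁) = (1/λ)v₁ and ρ(v₂) = λv₂. Then Δ₁ ∩ ρ⁻¹(Δ₂) ⊆ {0}; equivalently, ρ maps every nonzero element of Δ₁ outside Δ₂. -/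
open scoped RealInnerProductSpace

set_option maxHeartbeats 1000000 in
/-- The 2-dimensional separation argument of Theorem B(2): a diagonal linear map with
eigenvalues `1/λ, λ` (for suitable `λ`) moves the cone `Δ₁` off the cone `Δ₂`. -/
theorem stmt3 (V : Type*) [NormedAddCommGroup V] [InnerProductSpace ℝ V]
    (hdim : Module.finrank ℝ V = 2)
    (v₁ v₂ : V) (hv₁ : ‖v₁‖ = 1) (hv₂ : ‖v₂‖ = 1) (horth : ⟪v₁, v₂⟫ = 0)
    (Δ₁ Δ₂ : Set V)
    (hcone₁ : ∀ x ∈ Δ₁, ∀ t : ℝ, 0 < t → t • x ∈ Δ₁)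
    (hcone₂ : ∀ x ∈ Δ₂, ∀ t : ℝ, 0 < t → t • x ∈ Δ₂)
    (ε₁ ε₂ : ℝ) (hε₁ : 0 < ε₁) (hε₁' : ε₁ < 1) (hε₂ : 0 < ε₂) (hε₂' : ε₂ < 1)
    (hsep₁ : ∀ x ∈ Δ₁, x ≠ 0 → ⟪x, v₁⟫ ^ 2 ≤ ε₁ * ‖x‖ ^ 2)
    (hsep₂ : ∀ x ∈ Δ₂, x ≠ 0 → ⟪x, v₂⟫ ^ 2 ≤ ε₂ * ‖x‖ ^ 2)
    (lam : ℝ) (hlam : 0 < lam)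
    (hlam4 : ε₁ * ε₂ / ((1 - ε₁) * (1 - ε₂)) < lam ^ 4)
    (ρ : V →ₗ[ℝ] V) (hρ₁ : ρ v₁ = (1 / lam) • v₁) (hρ₂ : ρ v₂ = lam • v₂) :
    ∀ x ∈ Δ₁, x ≠ 0 → ρ x ∉ Δ₂ := by
  have hlam' : lam ≠ 0 := ne_of_gt hlam
  haveI : FiniteDimensional ℝ V := FiniteDimensional.of_finrank_eq_succ hdim
  -- orthonormality of the pair
  have hON : Orthonormal ℝ ![v₁, v₂] := by
    constructor
    · intro i; fin_cases i <;> simpa using (by assumption : _)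
    · intro i j hij
      fin_cases i <;> fin_cases j <;> simp_all [real_inner_comm v₂ v₁]
  have hspan : Submodule.span ℝ ({v₁, v₂} : Set V) = ⊤ := by
    have hli := hON.linearIndependent
    have hcard : Set.range ![v₁, v₂] = ({v₁, v₂} : Set V) := by
      ext y; simp [Fin.exists_fin_two]; tauto
    have := hli.span_eq_top_of_card_eq_finrank (by simp [hdim])
    rw [← hcard]; exact this
  intro x hx hx0 hρx
  obtain ⟨a, b, hab⟩ := Submodule.mem_span_pair.mp
    (by rw [hspan]; trivial : x ∈ Submodule.span ℝ ({v₁, v₂} : Set V))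
  have hn1 : ⟪v₁, v₁⟫ = 1 := by rw [real_inner_self_eq_norm_sq, hv₁]; norm_num
  have hn2 : ⟪v₂, v₂⟫ = 1 := by rw [real_inner_self_eq_norm_sq, hv₂]; norm_num
  have horth' : ⟪v₂, v₁⟫ = 0 := by rw [real_inner_comm]; exact horth
  have hxa : ⟪x, v₁⟫ = a := by
    rw [← hab]; simp [inner_add_left, real_inner_smul_left, hn1, horth', hv₁]
  have hxb : ⟪x, v₂⟫ = b := by
    rw [← hab]; simp [inner_add_left, real_inner_smul_left, hn2, horth, hv₂]
  have hnx : ‖x‖ ^ 2 = a ^ 2 + b ^ 2 := by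
    rw [← real_inner_self_eq_norm_sq]
    nth_rewrite 1 [← hab]
    rw [inner_add_left, real_inner_smul_left, real_inner_smul_left,
      show ⟪v₁, x⟫ = a from by rw [real_inner_comm]; exact hxa,
      show ⟪v₂, x⟫ = b from by rw [real_inner_comm]; exact hxb]
    ring
  have hy : ρ x = (a / lam) • v₁ + (lam * b) • v₂ := by
    rw [← hab]; simp [map_add, map_smul, hρ₁, hρ₂, smul_smul]
    rw [div_eq_mul_inv, mul_comm lam b]
  have hya : ⟪ρ x, v₁⟫ = a / lam := by
    rw [hy]; simp [inner_add_left, real_inner_smul_left, hn1, horth', hv₁]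
  have hyb : ⟪ρ x, v₂⟫ = lam * b := by
    rw [hy]; simp [inner_add_left, real_inner_smul_left, hn2, horth, hv₂]
  have hny : ‖ρ x‖ ^ 2 = (a / lam) ^ 2 + (lam * b) ^ 2 := by
    rw [← real_inner_self_eq_norm_sq]
    nth_rewrite 1 [hy]
    rw [inner_add_left, real_inner_smul_left, real_inner_smul_left,
      show ⟪v₁, ρ x⟫ = a / lam from by rw [real_inner_comm]; exact hya,
      show ⟪v₂, ρ x⟫ = lam * b from by rw [real_inner_comm]; exact hyb]
    ring
  have hab0 : ¬ (a = 0 ∧ b = 0) := by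
    rintro ⟨rfl, rfl⟩
    apply hx0; rw [← hab]; simp
  have hy0 : ρ x ≠ 0 := by
    intro h
    apply hab0
    have ha : a / lam = 0 := by rw [← hya, h, inner_zero_left]
    have hb : lam * b = 0 := by rw [← hyb, h, inner_zero_left]
    constructor
    · field_simp at ha; simpa using ha
    · rcases mul_eq_zero.mp hb with h | h
      · exact absurd h hlam'
      · exact h
  have h1 := hsep₁ x hx hx0
  have h2 := hsep₂ _ hρx hy0
  rw [hxa, hnx] at h1
  rw [hyb, hny] at h2
  -- clear denominators
  have hl2 : (0:ℝ) < lam ^ 2 := by positivity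
  have h2' : lam ^ 4 * b ^ 2 ≤ ε₂ * (a ^ 2 + lam ^ 4 * b ^ 2) := by
    have h := mul_le_mul_of_nonneg_left h2 (le_of_lt hl2)
    rw [div_pow] at h
    have hc : lam ^ 2 * (a ^ 2 / lam ^ 2) = a ^ 2 := by field_simp
    nlinarith [h, hc]
  have hprod : ε₁ * ε₂ < lam ^ 4 * ((1 - ε₁) * (1 - ε₂)) := by
    have hpos : (0:ℝ) < (1 - ε₁) * (1 - ε₂) :=
      mul_pos (by linarith) (by linarith)
    rw [div_lt_iff₀ hpos] at hlam4
    linarith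
  clear hy hya hyb hnx hny hxa hxb hn1 hn2 horth horth' hab hON hspan
  clear hsep₁ hsep₂ hcone₁ hcone₂ hρ₁ hρ₂ hv₁ hv₂ hx hρx hx0 hy0 hdim hlam4 h2
  clear ρ x Δ₁ Δ₂ v₁ v₂
  have h1' : (1 - ε₁) * a ^ 2 ≤ ε₁ * b ^ 2 := by nlinarith
  have h2'' : (1 - ε₂) * (lam ^ 4 * b ^ 2) ≤ ε₂ * a ^ 2 := by nlinarith
  -- case analysis
  rcases eq_or_ne b 0 with hb | hb
  · subst hb
    have ha2 : a ^ 2 = 0 := le_antisymm (by nlinarith) (sq_nonneg a)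
    exact hab0 ⟨pow_eq_zero_iff (by norm_num : 2 ≠ 0) |>.mp ha2, rfl⟩
  · have hb2 : (0:ℝ) < b ^ 2 := by positivity
    rcases eq_or_ne a 0 with ha | ha
    · subst ha
      nlinarith
    · have ha2 : (0:ℝ) < a ^ 2 := by positivity
      have hkey := mul_le_mul h1' h2''
        (mul_nonneg (by linarith) (by positivity)) (by positivity)
      nlinarith [hkey, mul_pos ha2 hb2]
end

section
/- Let V be a finite-dimensional real vector space and Δ a closed convex polyhedral cone in V (finite intersection of closed half-spaces through the origin). Then the set of k-dimensional linear subspaces W of V with W ∩ Δ = {0} is an open subset of the Grassmannian of k-dimensional subspaces of V. -/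
open scoped RealInnerProductSpace

variable (k : ℕ) (V : Type*) [NormedAddCommGroup V] [InnerProductSpace ℝ V]

/-- Linearly independent `k`-tuples in `V`, up to equality of spans: the points of the
Grassmannian of `k`-dimensional subspaces of `V`. -/
def grassSetoid : Setoid { v : Fin k → V // LinearIndependent ℝ v } where
  r a b := Submodule.span ℝ (Set.range (a : Fin k → V)) =
    Submodule.span ℝ (Set.range (b : Fin k → V))
  iseqv := ⟨fun _ => rfl, Eq.symm, Eq.trans⟩

/-- The Grassmannian of `k`-dimensional subspaces of `V`, as the quotient of the space of
linearly independent `k`-tuples (with its natural topology) by equality of spans; it carries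
the quotient topology, which is the usual manifold topology. -/
def Grassmannian := Quotient (grassSetoid k V)

instance : TopologicalSpace (Grassmannian k V) :=
  instTopologicalSpaceQuotient

/-- The (well-defined) property of a point of the Grassmannian that the corresponding
`k`-dimensional subspace meets the set `Δ` only in `0`. -/
def avoids (Δ : Set V) : Grassmannian k V → Prop :=
  Quotient.lift
    (fun v : { v : Fin k → V // LinearIndependent ℝ v } =>
      ∀ y ∈ Submodule.span ℝ (Set.range (v : Fin k → V)), y ∈ Δ → y = 0)
    (fun a b h => by
      try dsimp only
      rw [show Submodule.span ℝ (Set.range (a : Fin k → V)) =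
        Submodule.span ℝ (Set.range (b : Fin k → V)) from h])

/-- The set of `k`-dimensional subspaces meeting a closed convex polyhedral cone
`Δ = {x : ∀ i, ⟪x, η i⟫ ≥ 0}` only in `0` is open in the Grassmannian. -/
theorem stmt4 [FiniteDimensional ℝ V] (r : ℕ) (η : Fin r → V) (hη : ∀ i, ‖η i‖ = 1) :
    IsOpen { x : Grassmannian k V | avoids k V { y : V | ∀ i, 0 ≤ ⟪y, η i⟫ } x } := by
  set Δ : Set V := { y : V | ∀ i, 0 ≤ ⟪y, η i⟫ } with hΔ
  -- Δ is closed
  have hΔclosed : IsClosed Δ := by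
    have : Δ = ⋂ i, { y : V | 0 ≤ ⟪y, η i⟫ } := by ext y; simp [hΔ, Set.mem_iInter]
    rw [this]
    exact isClosed_iInter fun i =>
      isClosed_le continuous_const (continuous_id.inner continuous_const)
  -- Δ is a cone
  have hΔcone : ∀ (t : ℝ), 0 < t → ∀ y ∈ Δ, t • y ∈ Δ := by
    intro t ht y hy i
    rw [real_inner_smul_left]
    exact mul_nonneg ht.le (hy i)
  -- the sphere
  set S := Metric.sphere (0 : Fin k → ℝ) 1 with hS
  haveI : CompactSpace S := isCompact_iff_compactSpace.mp (isCompact_sphere _ _)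
  -- the sum map
  have hF : Continuous fun p : (Fin k → V) × S => ∑ i, (p.2 : Fin k → ℝ) i • p.1 i := by
    apply continuous_finset_sum
    intro i _
    exact ((continuous_apply i).comp (continuous_subtype_val.comp continuous_snd)).smul
      ((continuous_apply i).comp continuous_fst)
  -- the open set in the ambient tuple space
  have hU : IsOpen { v : Fin k → V | ∀ c : S, ∑ i, (c : Fin k → ℝ) i • v i ∉ Δ } := by
    rw [← isClosed_compl_iff]
    have : { v : Fin k → V | ∀ c : S, ∑ i, (c : Fin k → ℝ) i • v i ∉ Δ }ᶜ =
        Prod.fst '' { p : (Fin k → V) × S | ∑ i, (p.2 : Fin k → ℝ) i • p.1 i ∈ Δ } := by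
      ext v
      simp only [Set.mem_compl_iff, Set.mem_setOf_eq, not_forall, not_not, Set.mem_image,
        Prod.exists]
      constructor
      · rintro ⟨c, hc⟩; exact ⟨v, c, hc, rfl⟩
      · rintro ⟨v', c, hc, rfl⟩; exact ⟨c, hc⟩
    rw [this]
    exact isClosedMap_fst_of_compactSpace _ (hΔclosed.preimage hF)
  -- conclude via the quotient map
  have key : IsOpen (Quotient.mk (grassSetoid k V) ⁻¹'
      { x : Grassmannian k V | avoids k V Δ x }) := by
    have heq : Quotient.mk (grassSetoid k V) ⁻¹' { x : Grassmannian k V | avoids k V Δ x } =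
        Subtype.val ⁻¹' { v : Fin k → V | ∀ c : S, ∑ i, (c : Fin k → ℝ) i • v i ∉ Δ } := by
      ext v
      obtain ⟨v, hv⟩ := v
      simp only [Set.mem_preimage, Set.mem_setOf_eq]
      show (∀ y ∈ Submodule.span ℝ (Set.range v), y ∈ Δ → y = 0) ↔ _
      constructor
      · intro h c hc
        have hmem : (∑ i, (c : Fin k → ℝ) i • v i) ∈ Submodule.span ℝ (Set.range v) := by
          exact Submodule.sum_mem _ fun i _ =>
            Submodule.smul_mem _ _ (Submodule.subset_span ⟨i, rfl⟩)
        have h0 := h _ hmem hc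
        have := (Fintype.linearIndependent_iff.mp hv) _ h0
        have hc1 : ‖(c : Fin k → ℝ)‖ = 1 := by
          simpa [hS] using c.2
        have : (c : Fin k → ℝ) = 0 := funext this
        rw [this] at hc1
        simp at hc1
      · intro h y hy hyΔ
        by_contra hy0
        obtain ⟨c, hc⟩ := (Submodule.mem_span_range_iff_exists_fun ℝ).mp hy
        have hcne : c ≠ 0 := by
          rintro rfl
          simp at hc
          exact hy0 hc.symm
        have hcn : (0 : ℝ) < ‖c‖ := norm_pos_iff.mpr hcne
        set c' : Fin k → ℝ := ‖c‖⁻¹ • c with hc'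
        have hc'S : c' ∈ S := by
          simp only [hS, Metric.mem_sphere, dist_zero_right, hc', norm_smul, norm_inv,
            norm_norm]
          field_simp
        have hsum : ∑ i, c' i • v i = ‖c‖⁻¹ • y := by
          rw [← hc, Finset.smul_sum]
          simp [hc', smul_smul]
        exact h ⟨c', hc'S⟩ (hsum ▸ hΔcone _ (inv_pos.mpr hcn) y hyΔ)
    rw [heq]
    exact hU.preimage continuous_subtype_val
  exact isOpen_coinduced.mpr key
end
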